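/- For every ε > 0 and every θ₀ ∈ ℝ, the function F_ε(z) = [1 − i(θ₀/(4π))√z]·[1 − √(1−z)] + i(ε/(4π))²·√(1−z)·√z, with √· the principal complex square root, satisfies F_ε(0) = 0 and F_ε(z)/√z → i·ε²/(4π)² as z → 0 (z ≠ 0); equivalently, there exist C, r > 0 such that |F_ε(z) − i(ε²/(4π)²)√z| ≤ C|z| for all |z| < r. Moreover F_ε(λ) ≠ 0 for all real λ > 0 when ε is small enough. -/

import Mathlib

open Complex

lemma sqrtC_mul_self (w : ℂ) : w ^ ((1:ℂ)/2) * w ^ ((1:ℂ)/2) = w := by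
  rcases eq_or_ne w 0 with h | h
  · simp [h, Complex.zero_cpow (by norm_num : (1:ℂ)/2 ≠ 0)]
  · rw [← Complex.cpow_add _ _ h]
    norm_num

lemma sqrtC_re_nonneg (w : ℂ) : 0 ≤ (w ^ ((1:ℂ)/2)).re := by
  rcases eq_or_ne w 0 with h | h
  · simp [h, Complex.zero_cpow (by norm_num : (1:ℂ)/2 ≠ 0)]
  · rw [Complex.cpow_def_of_ne_zero h, Complex.exp_re]
    apply mul_nonneg (Real.exp_nonneg _)
    apply Real.cos_nonneg_of_mem_Icc
    have him : (Complex.log w * ((1:ℂ)/2)).im = w.arg / 2 := by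
      simp [Complex.mul_im, Complex.log_im]
      ring
    rw [him]
    have h1 := Complex.neg_pi_lt_arg w
    have h2 := Complex.arg_le_pi w
    constructor <;> [linarith; linarith]

lemma sqrtC_ofReal {x : ℝ} (hx : 0 ≤ x) :
    ((x : ℂ)) ^ ((1:ℂ)/2) = ((Real.sqrt x : ℝ) : ℂ) := by
  rw [Real.sqrt_eq_rpow, Complex.ofReal_cpow hx]
  norm_num

noncomputable def Fden (θ₀ ε : ℝ) (z : ℂ) : ℂ :=
  (1 - Complex.I * ((θ₀ / (4 * Real.pi) : ℝ) : ℂ) * z ^ ((1 : ℂ) / 2)) *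
      (1 - (1 - z) ^ ((1 : ℂ) / 2)) +
    Complex.I * ((ε / (4 * Real.pi) : ℝ) : ℂ) ^ 2 *
      (1 - z) ^ ((1 : ℂ) / 2) * z ^ ((1 : ℂ) / 2)

/-- d = 3, c = 0: for every ε > 0 and θ₀ ∈ ℝ, `F_ε(0) = 0` and
`F_ε(z) = i(ε²/(4π)²)√z + O(z)` near `z = 0` (a zero-energy resonance:
the resolvent has a `z^{−1/2}` singularity); moreover for ε small enough
`F_ε(λ) ≠ 0` for all real `λ > 0`. -/
theorem zero_energy_resonance_d3 (θ₀ : ℝ) :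
    (∀ ε : ℝ, 0 < ε →
      Fden θ₀ ε 0 = 0 ∧
      ∃ C > (0 : ℝ), ∃ r > (0 : ℝ), ∀ z : ℂ, ‖z‖ < r →
        ‖Fden θ₀ ε z -
            Complex.I * ((ε ^ 2 / (4 * Real.pi) ^ 2 : ℝ) : ℂ) * z ^ ((1 : ℂ) / 2)‖ ≤
          C * ‖z‖) ∧
    (∃ ε₀ > (0 : ℝ), ∀ ε : ℝ, 0 < ε → ε < ε₀ → ∀ lam : ℝ, 0 < lam →
      Fden θ₀ ε ((lam : ℝ) : ℂ) ≠ 0) := by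
  have hπ : (0:ℝ) < Real.pi := Real.pi_pos
  constructor
  · intro ε hε
    constructor
    · simp [Fden, Complex.zero_cpow (by norm_num : (1:ℂ)/2 ≠ 0)]
    · -- quantitative bound
      set a : ℝ := θ₀ / (4 * Real.pi) with ha
      set b : ℝ := ε / (4 * Real.pi) with hb
      refine ⟨1 + |a| + b^2, by positivity, 1, by norm_num, ?_⟩
      intro z hz
      set s : ℂ := z ^ ((1:ℂ)/2) with hsdef
      set w : ℂ := (1 - z) ^ ((1:ℂ)/2) with hwdef
      have hww : w * w = 1 - z := sqrtC_mul_self _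
      have hss : s * s = z := sqrtC_mul_self _
      -- |s| ≤ 1
      have habs_s : norm s ≤ 1 := by
        nlinarith [norm_mul s s, hz, norm_nonneg s,
          congrArg norm hss, norm_nonneg z]
      -- |1 - w| ≤ |z|
      have hw1 : (1 - w) * (1 + w) = z := by
        have := hww; ring_nf; linear_combination -hww
      have h1w : (1:ℝ) ≤ norm (1 + w) := by
        have hre : 0 ≤ w.re := sqrtC_re_nonneg _
        have : (1 + w).re ≤ norm (1 + w) := Complex.re_le_norm _
        simp [Complex.add_re] at this
        linarith
      have habs_1w : norm (1 - w) ≤ norm z := by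
        have h := congrArg norm hw1
        rw [norm_mul] at h
        nlinarith [norm_nonneg (1 - w)]
      -- cast
      have hcast : Complex.I * ((ε ^ 2 / (4 * Real.pi) ^ 2 : ℝ) : ℂ) =
          Complex.I * ((b : ℝ) : ℂ)^2 := by
        rw [hb]; push_cast; ring
      have hfact : Fden θ₀ ε z -
          Complex.I * ((ε ^ 2 / (4 * Real.pi) ^ 2 : ℝ) : ℂ) * z ^ ((1 : ℂ) / 2) =
          (1 - w) * (1 - Complex.I * (a:ℂ) * s - Complex.I * ((b:ℝ):ℂ)^2 * s) := by
        rw [Fden, hcast, ← ha, ← hb, ← hsdef, ← hwdef]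
        ring
      rw [hfact, norm_mul]
      have hbound : norm (1 - Complex.I * (a:ℂ) * s - Complex.I * ((b:ℝ):ℂ)^2 * s)
          ≤ 1 + |a| + b^2 := by
        calc norm (1 - Complex.I * (a:ℂ) * s - Complex.I * ((b:ℝ):ℂ)^2 * s)
            ≤ norm (1 - Complex.I * (a:ℂ) * s) + norm (Complex.I * ((b:ℝ):ℂ)^2 * s) := by
              apply norm_sub_le
          _ ≤ (‖(1:ℂ)‖ + norm (Complex.I * (a:ℂ) * s)) + norm (Complex.I * ((b:ℝ):ℂ)^2 * s) := by
              gcongr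
              apply norm_sub_le
          _ ≤ 1 + |a| + b^2 := by
              simp [norm_mul, Complex.norm_real, abs_nonneg]
              nlinarith [habs_s, abs_nonneg a, sq_nonneg b, norm_nonneg s]
      calc norm (1 - w) * norm (1 - Complex.I * (a:ℂ) * s - Complex.I * ((b:ℝ):ℂ)^2 * s)
          ≤ norm z * (1 + |a| + b^2) := by
            apply mul_le_mul habs_1w hbound (norm_nonneg _) (norm_nonneg _)
        _ = (1 + |a| + b^2) * norm z := by ring
  · refine ⟨if θ₀ < 0 then Real.sqrt (-(4 * Real.pi * θ₀)) else 1, ?_, ?_⟩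
    · split_ifs with h
      · exact Real.sqrt_pos.mpr (by nlinarith)
      · norm_num
    · intro ε hε hεlt lam hlam hF
      obtain ⟨a, ha⟩ : ∃ a : ℝ, a = θ₀ / (4 * Real.pi) := ⟨_, rfl⟩
      obtain ⟨b, hb⟩ : ∃ b : ℝ, b = ε / (4 * Real.pi) := ⟨_, rfl⟩
      have hsign : 0 ≤ a * (a + b^2) := by
        by_cases h : θ₀ < 0
        · rw [if_pos h] at hεlt
          have hpos : (0:ℝ) < -(4*Real.pi*θ₀) := by nlinarith
          have hε2 : ε^2 < -(4*Real.pi*θ₀) := by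
            have hsq := Real.sq_sqrt hpos.le
            nlinarith [Real.sqrt_nonneg (-(4*Real.pi*θ₀))]
          have ha0 : a < 0 := by rw [ha]; exact div_neg_of_neg_of_pos h (by positivity)
          have hab : a + b^2 < 0 := by
            have heq : a + b^2 = (4*Real.pi*θ₀ + ε^2)/(16*Real.pi^2) := by
              rw [ha, hb]; field_simp; ring
            rw [heq]
            exact div_neg_of_neg_of_pos (by linarith) (by positivity)
          nlinarith
        · rw [if_neg h] at hεlt
          push_neg at h
          have ha0 : 0 ≤ a := by rw [ha]; exact div_nonneg h (by positivity)
          have hb2 : 0 ≤ a + b^2 := by positivity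
          exact mul_nonneg ha0 hb2
      obtain ⟨s, hsdef⟩ : ∃ s : ℝ, s = Real.sqrt lam := ⟨_, rfl⟩
      have hs : s * s = lam := by rw [hsdef]; exact Real.mul_self_sqrt hlam.le
      have hsC : ((lam:ℂ)) ^ ((1:ℂ)/2) = ((s:ℝ):ℂ) := by
        rw [hsdef]; exact sqrtC_ofReal hlam.le
      obtain ⟨w, hwdef⟩ : ∃ w : ℂ, w = (1 - (lam:ℂ)) ^ ((1:ℂ)/2) := ⟨_, rfl⟩
      have hww : w * w = 1 - (lam:ℂ) := by rw [hwdef]; exact sqrtC_mul_self _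
      obtain ⟨u, hudef⟩ : ∃ u : ℝ, u = w.re := ⟨_, rfl⟩
      obtain ⟨v, hvdef⟩ : ∃ v : ℝ, v = w.im := ⟨_, rfl⟩
      have hu : 0 ≤ u := by rw [hudef, hwdef]; exact sqrtC_re_nonneg _
      have huv : u * v = 0 := by
        have h1 := congrArg Complex.im hww
        simp [Complex.mul_im, ← hudef, ← hvdef] at h1
        linarith
      have huv2 : u * u - v * v = 1 - lam := by
        have h1 := congrArg Complex.re hww
        simpa [Complex.mul_re, ← hudef, ← hvdef] using h1
      rw [Fden, hsC, ← ha, ← hb, ← hwdef, ← Complex.ofReal_pow] at hF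
      rw [show w = (u:ℂ) + (v:ℂ)*I by rw [hudef, hvdef]; exact (Complex.re_add_im w).symm] at hF
      have hre := congrArg Complex.re hF
      have him := congrArg Complex.im hF
      simp only [Complex.add_re, Complex.add_im, Complex.sub_re, Complex.sub_im,
        Complex.mul_re, Complex.mul_im, Complex.one_re, Complex.one_im,
        Complex.I_re, Complex.I_im, Complex.ofReal_re, Complex.ofReal_im,
        Complex.zero_re, Complex.zero_im] at hre him
      ring_nf at hre him
      rcases mul_eq_zero.mp huv with h0 | h0
      · rw [h0] at hre him
        ring_nf at hre him
        have hv : v = -(a*s) := by linarith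
        rw [hv] at hre
        nlinarith [mul_nonneg hsign (mul_self_nonneg s), hre]
      · rw [h0] at hre huv2
        ring_nf at hre huv2
        nlinarith [hre, huv2, hlam]
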